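/- On the positive half-line the pieces of K₊ and K₋ interlace in the following order: for every i ∈ ℤ, every x ∈ T₀^[i] '' (Q '' C₁), every y ∈ T₀^[i] '' C₁ and every z ∈ T₀^[i−1] '' (Q '' C₁) satisfy x < y < z. -/
import Mathlib


noncomputable section

/-- The affine contraction of ratio 1/100 fixing 0. -/
def T0 (x : ℝ) : ℝ := x / 100

/-- The affine contraction of ratio 1/100 fixing 1. -/
def T1 (x : ℝ) : ℝ := 1 + (x - 1) / 100

/-- The affine contraction of ratio 1/100 fixing -1. -/
def Tm1 (x : ℝ) : ℝ := -1 + (x + 1) / 100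

/-- The inverse of `T0`. -/
def T0inv (x : ℝ) : ℝ := 100 * x

/-- The `i`-th iterate of `T0` for `i ≥ 0`, and the `|i|`-th iterate of
`T0⁻¹ : x ↦ 100 x` for `i < 0`. -/
def T0z : ℤ → ℝ → ℝ
  | Int.ofNat n => T0^[n]
  | Int.negSucc n => T0inv^[n + 1]

/-- The set `K₊ = {0} ∪ ⋃ i ∈ ℤ, T₀^[i] '' (C₁ ∪ C₋₁)` where `C₁ = T₁ '' C`,
`C₋₁ = T₋₁ '' C`. -/
def Kplus (C : Set ℝ) : Set ℝ := {0} ∪ ⋃ i : ℤ, T0z i '' (T1 '' C ∪ Tm1 '' C)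

/-- The map `Q : x ↦ x/10`. -/
def Q (x : ℝ) : ℝ := x / 10

/-- The set `K₋ = Q '' K₊`. -/
def Kminus (C : Set ℝ) : Set ℝ := Q '' Kplus C

/-- The bijection `h` : `x ↦ x/10` for `x ≥ 0`, `x ↦ 10 x` for `x < 0`. -/
def hmap (x : ℝ) : ℝ := if 0 ≤ x then x / 10 else 10 * x

/-- The inverse of `h` : `y ↦ 10 y` for `y ≥ 0`, `y ↦ y/10` for `y < 0`. -/
def hmapInv (y : ℝ) : ℝ := if 0 ≤ y then 10 * y else y / 10

/-- The inverse of `T₋₁` : `x ↦ 100 x + 99`. -/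
def Tm1inv (x : ℝ) : ℝ := 100 * x + 99


lemma T0_iter (n : ℕ) (x : ℝ) : T0^[n] x = x / 100 ^ n := by
  induction n with
  | zero => simp
  | succ k ih =>
    rw [Function.iterate_succ_apply', ih, T0, pow_succ]
    ring

lemma T0inv_iter (n : ℕ) (x : ℝ) : T0inv^[n] x = 100 ^ n * x := by
  induction n with
  | zero => simp
  | succ k ih =>
    rw [Function.iterate_succ_apply', ih, T0inv, pow_succ]
    ring

lemma T0z_eq (i : ℤ) (x : ℝ) : T0z i x = (100 : ℝ) ^ (-i) * x := by
  cases i with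
  | ofNat n =>
    show T0^[n] x = _
    rw [T0_iter]
    rw [show (-(Int.ofNat n)) = -(n : ℤ) by rfl, zpow_neg, zpow_natCast]
    field_simp
  | negSucc n =>
    show T0inv^[n+1] x = _
    rw [T0inv_iter]
    rw [show (-(Int.negSucc n)) = ((n + 1 : ℕ) : ℤ) by rfl, zpow_natCast]

lemma C_bounded (C : Set ℝ) (hne : C.Nonempty) (hcomp : IsCompact C)
    (hself : C = Tm1 '' C ∪ T0 '' C ∪ T1 '' C) :
    ∀ c ∈ C, |c| ≤ 1 := by
  obtain ⟨m, hmC, hmax⟩ := hcomp.exists_isMaxOn hne continuous_abs.continuousOn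
  have hm : ∀ c ∈ C, |c| ≤ |m| := hmax
  have hm1 : |m| ≤ 1 := by
    rw [hself] at hmC
    have key : |m| ≤ (99 + |m|) / 100 := by
      rcases hmC with (⟨c, hc, rfl⟩ | ⟨c, hc, rfl⟩) | ⟨c, hc, rfl⟩
      · have h1 : |c| ≤ |Tm1 c| := hm c hc
        have h2 : |Tm1 c| = |c - 99| / 100 := by
          rw [Tm1, show (-1 : ℝ) + (c + 1) / 100 = (c - 99) / 100 by ring,
            abs_div]
          norm_num
        have h3 : |c - 99| ≤ |c| + 99 := by
          have := abs_sub c 99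
          simp only [abs_of_nonneg (by norm_num : (0:ℝ) ≤ 99)] at this
          linarith
        rw [h2] at h1 ⊢
        linarith
      · have h1 : |c| ≤ |T0 c| := hm c hc
        have h2 : |T0 c| = |c| / 100 := by
          rw [T0, abs_div]; norm_num
        rw [h2] at h1 ⊢
        linarith
      · have h1 : |c| ≤ |T1 c| := hm c hc
        have h2 : |T1 c| = |99 + c| / 100 := by
          rw [T1, show (1 : ℝ) + (c - 1) / 100 = (99 + c) / 100 by ring,
            abs_div]
          norm_num
        have h3 : |99 + c| ≤ 99 + |c| := by
          calc |(99 : ℝ) + c| ≤ |(99 : ℝ)| + |c| := abs_add_le 99 c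
            _ = 99 + |c| := by norm_num
        rw [h2] at h1 ⊢
        linarith
    linarith
  exact fun c hc => le_trans (hm c hc) hm1

theorem stmt_9 (C : Set ℝ) (hne : C.Nonempty) (hcomp : IsCompact C)
    (hself : C = Tm1 '' C ∪ T0 '' C ∪ T1 '' C) (i : ℤ) (x y z : ℝ)
    (hx : x ∈ T0z i '' (Q '' (T1 '' C)))
    (hy : y ∈ T0z i '' (T1 '' C))
    (hz : z ∈ T0z (i - 1) '' (Q '' (T1 '' C))) :
    x < y ∧ y < z := by
  have hb := C_bounded C hne hcomp hself
  obtain ⟨-, ⟨-, ⟨a, haC, rfl⟩, rfl⟩, rfl⟩ := hx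
  obtain ⟨-, ⟨b, hbC, rfl⟩, rfl⟩ := hy
  obtain ⟨-, ⟨-, ⟨c, hcC, rfl⟩, rfl⟩, rfl⟩ := hz
  have ha := abs_le.mp (hb a haC)
  have hbb := abs_le.mp (hb b hbC)
  have hc := abs_le.mp (hb c hcC)
  set r := (100 : ℝ) ^ (-i) with hr_def
  have hr : 0 < r := zpow_pos (by norm_num) _
  have hrz : (100 : ℝ) ^ (-(i - 1)) = 100 * r := by
    rw [hr_def, show -(i - 1) = -i + 1 by ring,
      zpow_add₀ (by norm_num : (100 : ℝ) ≠ 0), zpow_one]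
    ring
  rw [T0z_eq, T0z_eq, T0z_eq, hrz]
  simp only [Q, T1]
  constructor
  · have h1 : (1 + (a - 1) / 100) / 10 < 1 + (b - 1) / 100 := by linarith
    calc r * ((1 + (a - 1) / 100) / 10) < r * (1 + (b - 1) / 100) :=
        mul_lt_mul_of_pos_left h1 hr
      _ = _ := by ring
  · have h1 : 1 + (b - 1) / 100 < 100 * ((1 + (c - 1) / 100) / 10) := by
      linarith
    calc r * (1 + (b - 1) / 100) < r * (100 * ((1 + (c - 1) / 100) / 10)) :=
        mul_lt_mul_of_pos_left h1 hr
      _ = 100 * r * ((1 + (c - 1) / 100) / 10) := by ring
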